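/- Let Q, B, m > 0, n ≥ 0, C, T₀ ∈ ℝ, and α_i > α_w. For D > 0 define α_D(T) = (α_i + α_w)/2 − ((α_i − α_w)/2)·tanh((T − T₀)/D), and set A_i = Q(1 − α_i) − B·T₀ and A_w = Q(1 − α_w) − B·T₀. Assume A_i < (n·T₀ + C)/m < A_w. Then there exist δ > 0 and D₀ > 0 such that for every D with 0 < D < D₀ and every T with |T − T₀| < δ satisfying the equilibrium condition Q(1 − α_D(T)) − (n·T + C)/m − B·T = 0, one has m·(Q·α_D'(T) + B) + n < 0; that is, the Jacobian [[−Q·α_D'(T) − B, −1], [n, −m]] of the energy balance system at this equilibrium has negative determinant, so the equilibrium is a saddle for all sufficiently small D. -/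

import Mathlib

/-- Derivative of `Real.tanh`. -/
lemma hasDerivAt_tanh' (x : ℝ) :
    HasDerivAt Real.tanh (1 - Real.tanh x ^ 2) x := by
  have hc : Real.cosh x ≠ 0 := (Real.cosh_pos x).ne'
  have h := (Real.hasDerivAt_sinh x).div (Real.hasDerivAt_cosh x) hc
  have heq : (Real.sinh / Real.cosh) = Real.tanh :=
    funext fun y => (Real.tanh_eq_sinh_div_cosh y).symm
  rw [heq] at h
  refine h.congr_deriv ?_
  rw [Real.tanh_eq_sinh_div_cosh]
  field_simp

/-- Energy balance model: with `αD(T) = (αi + αw)/2 − ((αi − αw)/2)·tanh((T − T₀)/D)`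
and assuming `Q(1 − αi) − B·T₀ < (n·T₀ + C)/m < Q(1 − αw) − B·T₀`, there are `δ > 0`
and `D₀ > 0` such that for every `0 < D < D₀` and every `T` with `|T − T₀| < δ`
satisfying the equilibrium condition `Q(1 − αD(T)) − (n·T + C)/m − B·T = 0`, one has
`m·(Q·αD'(T) + B) + n < 0`: the Jacobian `[[−Q·αD'(T) − B, −1], [n, −m]]` of the
energy balance system at this equilibrium has negative determinant, so the
equilibrium is a saddle for all sufficiently small `D`. -/
theorem ebm_equilibrium_is_saddle
    (Q B m n C T₀ ai aw : ℝ)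
    (hQ : 0 < Q) (hB : 0 < B) (hm : 0 < m) (hn : 0 ≤ n) (ha : aw < ai)
    (h_lo : Q * (1 - ai) - B * T₀ < (n * T₀ + C) / m)
    (h_hi : (n * T₀ + C) / m < Q * (1 - aw) - B * T₀) :
    ∃ δ > 0, ∃ D₀ > 0, ∀ D, 0 < D → D < D₀ →
      ∀ T, |T - T₀| < δ →
        Q * (1 - ((ai + aw) / 2 - (ai - aw) / 2 * Real.tanh ((T - T₀) / D)))
            - (n * T + C) / m - B * T = 0 →
        m * (Q * deriv
              (fun S : ℝ => (ai + aw) / 2 - (ai - aw) / 2 * Real.tanh ((S - T₀) / D))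
              T + B) + n < 0 := by
  have haw : 0 < ai - aw := by linarith
  have hm' : m ≠ 0 := ne_of_gt hm
  set K : ℝ := Q * (ai - aw) / 2 with hKdef
  have hK : 0 < K := by positivity
  set g₀ : ℝ := (n * T₀ + C) / m + B * T₀ - Q + Q * (ai + aw) / 2 with hg₀def
  have hg₀lo : -K < g₀ := by
    simp only [hg₀def, hKdef]; nlinarith [h_lo]
  have hg₀hi : g₀ < K := by
    simp only [hg₀def, hKdef]; nlinarith [h_hi]
  clear_value K g₀
  set G : ℝ := |g₀| with hGdef
  have hGK : G < K := abs_lt.mpr ⟨hg₀lo, hg₀hi⟩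
  have hG0 : 0 ≤ G := abs_nonneg _
  clear_value G
  set L : ℝ := n / m + B with hLdef
  have hL : 0 < L := by positivity
  clear_value L
  set δ : ℝ := (K - G) / (2 * L) with hδdef
  have hδ : 0 < δ := div_pos (by linarith) (by linarith)
  clear_value δ
  set c : ℝ := (K + G) / (2 * K) with hcdef
  have hc0 : 0 < c := by positivity
  have hc1 : c < 1 := by
    rw [hcdef, div_lt_one (by linarith)]; linarith
  have hc2 : 0 < 1 - c ^ 2 := by nlinarith
  clear_value c
  set D₀ : ℝ := m * Q * (ai - aw) * (1 - c ^ 2) / (2 * (m * B + n)) with hD₀def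
  have hmbn : 0 < m * B + n := by positivity
  have hD₀ : 0 < D₀ := by positivity
  clear_value D₀
  refine ⟨δ, hδ, D₀, hD₀, ?_⟩
  intro D hD hDD T hT heq
  have hD' : D ≠ 0 := ne_of_gt hD
  set t : ℝ := Real.tanh ((T - T₀) / D) with htdef
  have hderiv : deriv
      (fun S : ℝ => (ai + aw) / 2 - (ai - aw) / 2 * Real.tanh ((S - T₀) / D)) T
      = -((ai - aw) / 2 * ((1 - t ^ 2) * (1 / D))) := by
    have h1 : HasDerivAt (fun S : ℝ => (S - T₀) / D) (1 / D) T := by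
      simpa using ((hasDerivAt_id T).sub_const T₀).div_const D
    have h3 := (((hasDerivAt_tanh' ((T - T₀) / D)).comp T h1).const_mul
      ((ai - aw) / 2)).const_sub ((ai + aw) / 2)
    simp only [Function.comp_def] at h3
    exact h3.deriv
  rw [hderiv]
  -- equilibrium gives K * t = g(T)
  have hKt : K * t = g₀ + L * (T - T₀) := by
    rw [hg₀def, hLdef, hKdef]
    linear_combination heq
  clear_value t
  -- bound |t| < c, hence t² < c²
  have habs : |K * t| < (K + G) / 2 := by
    have h2 : |L * (T - T₀)| = L * |T - T₀| := by rw [abs_mul, abs_of_pos hL]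
    have h1 : |K * t| ≤ G + L * |T - T₀| := by
      calc |K * t| = |g₀ + L * (T - T₀)| := by rw [hKt]
        _ ≤ |g₀| + |L * (T - T₀)| := abs_add_le _ _
        _ = G + L * |T - T₀| := by rw [h2, hGdef]
    have h3 := mul_lt_mul_of_pos_left hT hL
    have h4 : L * δ = (K - G) / 2 := by
      rw [hδdef]; field_simp
    linarith
  have htc : |t| < c := by
    have hKc : (K + G) / 2 = K * c := by
      rw [hcdef]; field_simp
    have hKt' : |K * t| < K * c := hKc ▸ habs
    rw [abs_mul, abs_of_pos hK] at hKt'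
    exact lt_of_mul_lt_mul_left hKt' hK.le
  have ht2 : t ^ 2 < c ^ 2 := by
    rw [← sq_abs t]
    exact pow_lt_pow_left₀ htc (abs_nonneg t) (by norm_num)
  -- final inequality
  have hrw : m * (Q * -((ai - aw) / 2 * ((1 - t ^ 2) * (1 / D))) + B) + n
      = (-(m * Q * (ai - aw) * (1 - t ^ 2) / 2) + (m * B + n) * D) / D := by
    field_simp
    ring
  rw [hrw]
  apply div_neg_of_neg_of_pos _ hD
  have h1 : (m * B + n) * D < (m * B + n) * D₀ := mul_lt_mul_of_pos_left hDD hmbn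
  have h2 : (m * B + n) * D₀ = m * Q * (ai - aw) * (1 - c ^ 2) / 2 := by
    rw [hD₀def]; field_simp
  have h3 : m * Q * (ai - aw) * (1 - c ^ 2) ≤ m * Q * (ai - aw) * (1 - t ^ 2) :=
    mul_le_mul_of_nonneg_left (by linarith) (by positivity)
  linarith
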